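/- In the category of frames, a frame homomorphism is an extremal epimorphism if and only if it is surjective. -/

import Mathlib

open CategoryTheory

section Chain3

universe u

noncomputable instance : Order.Frame (ULift.{u} (Fin 3)) :=
  Order.Frame.ofMinimalAxioms <|
    Function.frameMinimalAxioms (Order.Frame.MinimalAxioms.of) ULift.down Iff.rfl
      ULift.down_inf
      (fun s => by rw [sSup_eq_iSup, ULift.down_iSup]; simp only [ULift.down_iSup])

lemma ulift_fin3_sSup_mem {s : Set (ULift.{u} (Fin 3))} (hs : s.Nonempty) : sSup s ∈ s := by
  obtain ⟨⟨a⟩, ha⟩ := hs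
  have h1 : (ULift.up ⁻¹' s).Nonempty := ⟨a, ha⟩
  have h2 : sSup (ULift.up ⁻¹' s) ∈ ULift.up ⁻¹' s :=
    h1.csSup_mem (Set.finite_univ.subset (Set.subset_univ _))
  have h3 : sSup s = ULift.up (sSup (ULift.up ⁻¹' s)) := rfl
  rw [h3]; exact h2

lemma ulift_fin3_top : (⊤ : ULift.{u} (Fin 3)) = ULift.up 2 :=
  le_antisymm (show (⊤ : ULift.{u} (Fin 3)).down ≤ Fin.last 2 from Fin.le_last _) le_top

lemma ulift_fin3_bot : (⊥ : ULift.{u} (Fin 3)) = ULift.up 0 :=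
  le_antisymm bot_le (show (0 : Fin 3) ≤ (⊥ : ULift.{u} (Fin 3)).down from Fin.zero_le _)

variable {N : Type*} [Order.Frame N]

private lemma chain3_mono (a : N) :
    Monotone (fun i : ULift.{u} (Fin 3) => if i.down = 0 then (⊥ : N) else if i.down = 1 then a else ⊤) := by
  rintro ⟨i⟩ ⟨j⟩ hij
  have hij' : i ≤ j := hij
  fin_cases i <;> fin_cases j <;> simp_all

/-- The "point" frame hom from the 3-chain picking out `a`. -/
noncomputable def framePt (a : N) : FrameHom (ULift.{u} (Fin 3)) N where
  toFun i := if i.down = 0 then ⊥ else if i.down = 1 then a else ⊤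
  map_inf' x y := by
    rcases le_total x y with h | h
    · rw [inf_eq_left.2 h]; exact (inf_eq_left.2 (chain3_mono a h)).symm
    · rw [inf_eq_right.2 h]; exact (inf_eq_right.2 (chain3_mono a h)).symm
  map_top' := by
    show (if (⊤ : ULift.{u} (Fin 3)).down = 0 then (⊥ : N)
      else if (⊤ : ULift.{u} (Fin 3)).down = 1 then a else ⊤) = ⊤
    rw [ulift_fin3_top]
    rw [if_neg (by decide), if_neg (by decide)]
  map_sSup' s := by
    rcases s.eq_empty_or_nonempty with rfl | hs
    · show (if (sSup (∅ : Set (ULift.{u} (Fin 3)))).down = 0 then (⊥ : N) else _) = _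
      rw [sSup_empty, ulift_fin3_bot]
      simp
    · apply le_antisymm
      · exact le_sSup ⟨sSup s, ulift_fin3_sSup_mem hs, rfl⟩
      · apply sSup_le
        rintro y ⟨i, hi, rfl⟩
        exact chain3_mono a (le_sSup hi)

lemma framePt_one (a : N) : framePt a (ULift.up 1) = a := by
  show (if (1 : Fin 3) = 0 then (⊥ : N) else if (1 : Fin 3) = 1 then a else ⊤) = a
  rw [if_neg (by decide), if_pos rfl]

end Chain3

universe u

lemma frm_injective_of_mono {N Y : Frm.{u}} (m : N ⟶ Y) [Mono m] :
    Function.Injective (show FrameHom N Y from (m).hom) := by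
  intro a b hab
  let T : Frm.{u} := Frm.of (ULift.{u} (Fin 3))
  let pa : FrameHom (ULift.{u} (Fin 3)) N := framePt a
  let pb : FrameHom (ULift.{u} (Fin 3)) N := framePt b
  have key : (show T ⟶ N from Frm.ofHom pa) ≫ m = (show T ⟶ N from Frm.ofHom pb) ≫ m := by
    apply Frm.ext
    rintro ⟨x⟩
    show (show FrameHom N Y from (m).hom) (framePt.{u, u} a (ULift.up x))
      = (show FrameHom N Y from (m).hom) (framePt.{u, u} b (ULift.up x))
    fin_cases x
    · rfl
    · show (show FrameHom N Y from (m).hom) (framePt.{u, u} a (ULift.up 1))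
        = (show FrameHom N Y from (m).hom) (framePt.{u, u} b (ULift.up 1))
      rw [framePt_one, framePt_one]
      exact hab
    · rfl
  have heq := (cancel_mono m).1 key
  calc a = framePt.{u, u} a (ULift.up 1) := (framePt_one.{u, u} a).symm
    _ = framePt.{u, u} b (ULift.up 1) := by
          have h2 : (framePt.{u, u} a : FrameHom (ULift.{u} (Fin 3)) N) = framePt.{u, u} b := congrArg (fun g => g.hom) heq
          rw [h2]
    _ = b := framePt_one.{u, u} b

section Image

variable {X Y : Type*} [Order.Frame X] [Order.Frame Y] (f : FrameHom X Y)

lemma range_sSup_mem {T : Set Y} (hT : T ⊆ Set.range f) : sSup T ∈ Set.range f := by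
  refine ⟨sSup (f ⁻¹' T), ?_⟩
  rw [map_sSup, Set.image_preimage_eq_of_subset hT]

/-- The image of a frame hom as a type. -/
def FrameRange := Set.range f

instance : PartialOrder (FrameRange f) := Subtype.partialOrder _

instance : SupSet (FrameRange f) :=
  ⟨fun s => ⟨sSup ((↑) '' s), range_sSup_mem f (by rintro y ⟨⟨y, hy⟩, -, rfl⟩; exact hy)⟩⟩

noncomputable instance : CompleteLattice (FrameRange f) :=
  completeLatticeOfSup _ (fun s => by
    constructor
    · intro a ha
      exact Subtype.coe_le_coe.1 (le_sSup ⟨a, ha, rfl⟩)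
    · intro b hb
      refine Subtype.coe_le_coe.1 (sSup_le ?_)
      rintro y ⟨a, ha, rfl⟩
      exact Subtype.coe_le_coe.2 (hb ha))

lemma FrameRange.coe_sSup (s : Set (FrameRange f)) :
    ((sSup s : FrameRange f) : Y) = sSup ((↑) '' s) := rfl

lemma FrameRange.coe_inf (a b : FrameRange f) :
    ((a ⊓ b : FrameRange f) : Y) = (a : Y) ⊓ (b : Y) := by
  obtain ⟨x, hx⟩ := a.2
  obtain ⟨y, hy⟩ := b.2
  have hmem : (a : Y) ⊓ (b : Y) ∈ Set.range f := ⟨x ⊓ y, by rw [map_inf, hx, hy]⟩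
  apply le_antisymm
  · exact le_inf (Subtype.coe_le_coe.2 inf_le_left) (Subtype.coe_le_coe.2 inf_le_right)
  · exact Subtype.coe_le_coe.2
      (le_inf (c := (⟨(a : Y) ⊓ (b : Y), hmem⟩ : FrameRange f)) (a := a) (b := b)
        (Subtype.coe_le_coe.1 (show ((⟨(a : Y) ⊓ (b : Y), hmem⟩ : FrameRange f) : Y) ≤ (a : Y) from inf_le_left)) (Subtype.coe_le_coe.1 (show ((⟨(a : Y) ⊓ (b : Y), hmem⟩ : FrameRange f) : Y) ≤ (b : Y) from inf_le_right)))

lemma FrameRange.coe_iSup {ι : Sort*} (g : ι → FrameRange f) :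
    ((⨆ i, g i : FrameRange f) : Y) = ⨆ i, (g i : Y) := by
  rw [iSup, FrameRange.coe_sSup, ← Set.range_comp, iSup]
  rfl

lemma FrameRange.coe_top : ((⊤ : FrameRange f) : Y) = ⊤ := by
  have hmem : (⊤ : Y) ∈ Set.range f := ⟨⊤, map_top f⟩
  exact le_antisymm le_top (Subtype.coe_le_coe.2 (le_top (a := (⟨⊤, hmem⟩ : FrameRange f))))

noncomputable instance : Order.Frame (FrameRange f) :=
  Order.Frame.ofMinimalAxioms
    ⟨fun a s => by
      apply Subtype.coe_le_coe.1
      rw [FrameRange.coe_inf, FrameRange.coe_sSup, inf_sSup_eq]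
      apply iSup₂_le
      rintro y ⟨b, hb, rfl⟩
      calc (a : Y) ⊓ (b : Y) = ((a ⊓ b : FrameRange f) : Y) := (FrameRange.coe_inf f a b).symm
        _ ≤ ((⨆ c ∈ s, a ⊓ c : FrameRange f) : Y) :=
            Subtype.coe_le_coe.2 (le_iSup₂ (f := fun c _ => a ⊓ c) b hb)⟩

/-- Inclusion of the range as a frame hom. -/
noncomputable def FrameRange.incl : FrameHom (FrameRange f) Y where
  toFun := (↑)
  map_inf' := FrameRange.coe_inf f
  map_top' := FrameRange.coe_top f
  map_sSup' := FrameRange.coe_sSup f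

/-- Corestriction of `f` onto its range. -/
noncomputable def FrameRange.corestrict : FrameHom X (FrameRange f) where
  toFun x := ⟨f x, ⟨x, rfl⟩⟩
  map_inf' x y := Subtype.ext (by rw [FrameRange.coe_inf]; exact map_inf f x y)
  map_top' := Subtype.ext (by rw [FrameRange.coe_top]; exact map_top f)
  map_sSup' s := Subtype.ext (by
    show f (sSup s) = ((sSup ((fun x => (⟨f x, ⟨x, rfl⟩⟩ : FrameRange f)) '' s) : FrameRange f) : Y)
    rw [FrameRange.coe_sSup, Set.image_image, map_sSup])

end Image

noncomputable def frm_isIso_of_bijective {N Y : Frm} (m : N ⟶ Y)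
    (hb : Function.Bijective (show FrameHom N Y from (m).hom)) : IsIso m := by
  let e : N ≃o Y :=
    { Equiv.ofBijective _ hb with
      map_rel_iff' := by
        intro a b
        constructor
        · intro hle
          have h1 : ((show FrameHom N Y from (m).hom) a : Y) ⊓ (show FrameHom N Y from (m).hom) b
              = (show FrameHom N Y from (m).hom) a := inf_eq_left.2 hle
          rw [← map_inf] at h1
          exact inf_eq_left.1 (hb.1 h1)
        · intro hle
          exact OrderHomClass.mono (show FrameHom N Y from (m).hom) hle }
  have : m = (Frm.Iso.mk e).hom := by
    apply Frm.ext; intro x; rfl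
  rw [this]
  infer_instance

/-- In the category `Frm` of frames, a frame homomorphism is an extremal epimorphism
(an epimorphism such that whenever it factors as `m ∘ h` with `m` monic, `m` is an
isomorphism) if and only if it is surjective. -/
theorem extremalEpi_iff_surjective {X Y : Frm} (f : X ⟶ Y) :
    (Epi f ∧ ∀ (N : Frm) (h : X ⟶ N) (m : N ⟶ Y), Mono m → f = h ≫ m → IsIso m) ↔
      Function.Surjective (show FrameHom X Y from (f).hom) := by
  constructor
  · rintro ⟨-, hfac⟩
    set F : FrameHom X Y := f.hom with hF
    let N : Frm := Frm.of (FrameRange F)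
    let m : N ⟶ Y := Frm.ofHom (FrameRange.incl F)
    let h : X ⟶ N := Frm.ofHom (FrameRange.corestrict F)
    have hmono : Mono m := ConcreteCategory.mono_of_injective m Subtype.val_injective
    have hiso : IsIso m := hfac N h m hmono (Frm.ext fun x => rfl)
    intro y
    obtain ⟨p, hp⟩ : ∃ p : FrameRange F, (show FrameHom N Y from (m).hom) p = y := by
      refine ⟨(show FrameHom Y N from (inv m).hom) y, ?_⟩
      exact congrArg (fun g : Y ⟶ Y => (show FrameHom Y Y from (g).hom) y) (IsIso.inv_hom_id m)
    obtain ⟨x, hx⟩ := p.2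
    exact ⟨x, hx.trans hp⟩
  · intro hs
    refine ⟨ConcreteCategory.epi_of_surjective f hs, ?_⟩
    intro N h m hm hfac
    have hinj : Function.Injective (show FrameHom N Y from (m).hom) := frm_injective_of_mono m
    have hsurj : Function.Surjective (show FrameHom N Y from (m).hom) := by
      intro y
      obtain ⟨x, hx⟩ := hs y
      refine ⟨(show FrameHom X N from (h).hom) x, ?_⟩
      have : (show FrameHom X Y from (f).hom) x
          = (show FrameHom N Y from (m).hom) ((show FrameHom X N from (h).hom) x) := by
        rw [hfac]; rfl
      exact this.symm.trans hx
    exact frm_isIso_of_bijective m ⟨hinj, hsurj⟩
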